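/- Let A, B be finite nonempty sets of integers with min A = min B = 0, max A = M, max B = N, M ≥ N, |A+B| = |A|+|B|-1+r, h_A = |[0,M]\A| ≤ |B|-2, and r ≤ |B|-2-δ(A,B). Let e be the greatest element of [0,N-1]\B with e ∉ A+B (set e = -1 if none exists), and let c be the smallest element of [1,N]\B with c + M ∉ A+B (set c = N+1 if none exists). Then the interval [e+1, M+c-1] is contained in A+B. -/
import Mathlib


open scoped Pointwise
open scoped Classical

theorem stmt9 (A B : Finset ℤ) (hA : A.Nonempty) (hB : B.Nonempty) (M N r e c : ℤ)
    (hminA : A.min' hA = 0) (hminB : B.min' hB = 0)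
    (hmaxA : A.max' hA = M) (hmaxB : B.max' hB = N) (hMN : N ≤ M)
    (hr : ((A + B).card : ℤ) = (A.card : ℤ) + (B.card : ℤ) - 1 + r)
    (hhole : ((Finset.Icc 0 M \ A).card : ℤ) ≤ (B.card : ℤ) - 2)
    (hrb : r ≤ (B.card : ℤ) - 2 - (if A ⊆ B then 1 else 0))
    (he : IsGreatest (insert (-1 : ℤ)
      {x : ℤ | x ∈ Finset.Icc 0 (N - 1) ∧ x ∉ B ∧ x ∉ A + B}) e)
    (hc : IsLeast (insert (N + 1 : ℤ)
      {x : ℤ | x ∈ Finset.Icc 1 N ∧ x ∉ B ∧ x + M ∉ A + B}) c) :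
    Finset.Icc (e + 1) (M + c - 1) ⊆ A + B := by
  intro x hx
  rw [Finset.mem_Icc] at hx
  by_contra hxAB
  have h0A : (0:ℤ) ∈ A := hminA ▸ A.min'_mem hA
  have hMA : M ∈ A := hmaxA ▸ A.max'_mem hA
  have hem : (-1:ℤ) ≤ e := he.2 (Set.mem_insert _ _)
  have hcm : c ≤ N + 1 := hc.2 (Set.mem_insert _ _)
  rcases le_or_gt x (N-1) with h1 | h1
  · have hxB : x ∉ B := fun hxB => hxAB (by simpa using Finset.add_mem_add h0A hxB)
    have hxe : x ≤ e := he.2 (Set.mem_insert_of_mem _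
      ⟨Finset.mem_Icc.mpr ⟨by linarith [hx.1], h1⟩, hxB, hxAB⟩)
    linarith [hx.1]
  rcases lt_or_ge M x with h2 | h2
  · have hy1 : (1:ℤ) ≤ x - M := by linarith
    have hy2 : x - M ≤ N := by linarith [hx.2]
    have hyB : x - M ∉ B := fun hyB => hxAB (by
      have := Finset.add_mem_add hMA hyB
      simpa using this)
    have hyc : c ≤ x - M := hc.2 (Set.mem_insert_of_mem _
      ⟨Finset.mem_Icc.mpr ⟨hy1, hy2⟩, hyB, by simpa using hxAB⟩)
    linarith [hx.2]
  · have key : ∀ b ∈ B, x - b ∈ Finset.Icc 0 M \ A := by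
      intro b hb
      have hb0 : (0:ℤ) ≤ b := hminB ▸ B.min'_le b hb
      have hbN : b ≤ N := hmaxB ▸ B.le_max' b hb
      rw [Finset.mem_sdiff, Finset.mem_Icc]
      refine ⟨⟨by linarith, by linarith⟩, fun hxbA => hxAB ?_⟩
      have := Finset.add_mem_add hxbA hb
      simpa using this
    have hcard : B.card ≤ (Finset.Icc 0 M \ A).card :=
      Finset.card_le_card_of_injOn (fun b => x - b) key
        (fun a _ b _ h => by simpa using h)
    have : (B.card : ℤ) ≤ ((Finset.Icc 0 M \ A).card : ℤ) := by exact_mod_cast hcard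
    linarith
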